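/- Let d ≥ 1 and n ≥ 2d. Every symmetric form of degree 2d in n variables is a real linear combination of the forms p_{μ1}^{(n)} p_{μ2}^{(n)} with μ1, μ2 partitions of d, together with the forms (p_{a+b}^{(n)} − p_a^{(n)} p_b^{(n)}) p_{μ1}^{(n)} p_{μ2}^{(n)} with a, b ∈ {1,…,d}, μ1 a partition of d−a and μ2 a partition of d−b (where the empty partition is allowed, with p_∅^{(n)} := 1). -/

import Mathlib

open MvPolynomial

/-- The i-th normalized power sum `p_i^{(n)} = (1/n)(x_1^i + ⋯ + x_n^i)`. -/
noncomputable def psum (n i : ℕ) : MvPolynomial (Fin n) ℝ :=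
  C ((n : ℝ)⁻¹) * ∑ j : Fin n, X j ^ i

/-- For a partition `λ` of `k`, `p_λ^{(n)} = p_{λ_1}^{(n)} ⋯ p_{λ_l}^{(n)}`. -/
noncomputable def pPart (n : ℕ) {k : ℕ} (lam : Nat.Partition k) : MvPolynomial (Fin n) ℝ :=
  (lam.parts.map (psum n)).prod

/-- The symmetric form `f^{(n)} = Σ_{λ ⊢ k} c_λ p_λ^{(n)}` determined by the
coefficient vector `c`. -/
noncomputable def symForm (n : ℕ) {k : ℕ} (c : Nat.Partition k → ℝ) : MvPolynomial (Fin n) ℝ :=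
  ∑ lam : Nat.Partition k, C (c lam) * pPart n lam

namespace SymFormAux

/-- Product of (unnormalized, mathlib) power sums over a multiset. -/
noncomputable def Pprod (n : ℕ) (m : Multiset ℕ) : MvPolynomial (Fin n) ℝ :=
  (m.map (MvPolynomial.psum (Fin n) ℝ)).prod

/-- Product of normalized power sums over a multiset. -/
noncomputable def Qprod (n : ℕ) (m : Multiset ℕ) : MvPolynomial (Fin n) ℝ :=
  (m.map (_root_.psum n)).prod

lemma Qprod_add (n : ℕ) (m₁ m₂ : Multiset ℕ) :
    Qprod n (m₁ + m₂) = Qprod n m₁ * Qprod n m₂ := by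
  simp [Qprod]

lemma Qprod_cons (n a : ℕ) (m : Multiset ℕ) :
    Qprod n (a ::ₘ m) = _root_.psum n a * Qprod n m := by
  simp [Qprod]

/-- Every elementary symmetric polynomial is in the adjoin of the power sums. -/
lemma esymm_mem_adjoin (n : ℕ) (k : ℕ) :
    MvPolynomial.esymm (Fin n) ℝ k ∈
      Algebra.adjoin ℝ (Set.range (MvPolynomial.psum (Fin n) ℝ)) := by
  induction k using Nat.strong_induction_on with
  | _ k ih =>
    rcases Nat.eq_zero_or_pos k with hk | hk
    · subst hk; rw [esymm_zero]; exact Subalgebra.one_mem _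
    have hk0 : (k : ℝ) ≠ 0 := Nat.cast_ne_zero.mpr (by omega)
    have hC : (C ((k : ℝ)⁻¹) : MvPolynomial (Fin n) ℝ) * (k : MvPolynomial (Fin n) ℝ) = 1 := by
      rw [← map_natCast (C : ℝ →+* MvPolynomial (Fin n) ℝ) k, ← map_mul,
        inv_mul_cancel₀ hk0, map_one]
    have key := MvPolynomial.mul_esymm_eq_sum (Fin n) ℝ k
    have : MvPolynomial.esymm (Fin n) ℝ k
        = C ((k : ℝ)⁻¹) * ((-1) ^ (k + 1) *
          ∑ a ∈ Finset.HasAntidiagonal.antidiagonal k with a.1 < k,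
            (-1) ^ a.1 * MvPolynomial.esymm (Fin n) ℝ a.1 * MvPolynomial.psum (Fin n) ℝ a.2) := by
      rw [← key, ← mul_assoc, hC, one_mul]
    rw [this]
    refine Subalgebra.mul_mem _ (Subalgebra.algebraMap_mem _ _) ?_
    refine Subalgebra.mul_mem _ (Subalgebra.pow_mem _ (Subalgebra.neg_mem _ (Subalgebra.one_mem _)) _) ?_
    refine Subalgebra.sum_mem _ fun a ha => ?_
    simp only [Finset.mem_filter, Finset.mem_antidiagonal] at ha
    refine Subalgebra.mul_mem _ (Subalgebra.mul_mem _
      (Subalgebra.pow_mem _ (Subalgebra.neg_mem _ (Subalgebra.one_mem _)) _) (ih a.1 ha.2)) ?_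
    exact Algebra.subset_adjoin ⟨a.2, rfl⟩

/-- Symmetric polynomials lie in the adjoin of the power sums. -/
lemma symm_mem_adjoin {n : ℕ} {f : MvPolynomial (Fin n) ℝ} (hf : f.IsSymmetric) :
    f ∈ Algebra.adjoin ℝ (Set.range (MvPolynomial.psum (Fin n) ℝ)) := by
  obtain ⟨q, hq⟩ := MvPolynomial.esymmAlgHom_surjective (σ := Fin n) (n := n) ℝ
    (by simp) ⟨f, (MvPolynomial.mem_symmetricSubalgebra f).2 hf⟩
  have hfq : f = aeval (fun i : Fin n => MvPolynomial.esymm (Fin n) ℝ (i + 1)) q := by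
    have := congrArg Subtype.val hq
    rw [MvPolynomial.esymmAlgHom_apply] at this
    exact this.symm
  have h1 : f ∈ Algebra.adjoin ℝ
      (Set.range fun i : Fin n => MvPolynomial.esymm (Fin n) ℝ (i + 1)) := by
    rw [Algebra.adjoin_range_eq_range_aeval]
    exact ⟨q, hfq.symm⟩
  refine Algebra.adjoin_le ?_ h1
  rintro x ⟨i, rfl⟩
  exact esymm_mem_adjoin n _

/-- Membership in the adjoin gives membership in the span of products of power sums. -/
lemma mem_span_Pprod {n : ℕ} {f : MvPolynomial (Fin n) ℝ}
    (hf : f ∈ Algebra.adjoin ℝ (Set.range (MvPolynomial.psum (Fin n) ℝ))) :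
    f ∈ Submodule.span ℝ (Set.range (Pprod n)) := by
  have h1 : f ∈ Submodule.span ℝ
      (Submonoid.closure (Set.range (MvPolynomial.psum (Fin n) ℝ)) : Set (MvPolynomial (Fin n) ℝ)) := by
    rw [← Algebra.adjoin_eq_span]; exact hf
  refine Submodule.span_mono ?_ h1
  intro x hx
  induction hx using Submonoid.closure_induction with
  | mem x hx => obtain ⟨i, rfl⟩ := hx; exact ⟨{i}, by simp [Pprod]⟩
  | one => exact ⟨0, by simp [Pprod]⟩
  | mul x y _ _ hx hy =>
    obtain ⟨m₁, rfl⟩ := hx; obtain ⟨m₂, rfl⟩ := hy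
    exact ⟨m₁ + m₂, by simp [Pprod]⟩

lemma psum_isHomogeneous (n i : ℕ) :
    (MvPolynomial.psum (Fin n) ℝ i).IsHomogeneous i := by
  refine MvPolynomial.IsHomogeneous.sum _ _ _ fun j _ => ?_
  simpa using (MvPolynomial.isHomogeneous_X ℝ j).pow i

lemma Pprod_isHomogeneous (n : ℕ) (m : Multiset ℕ) :
    (Pprod n m).IsHomogeneous m.sum := by
  induction m using Multiset.induction_on with
  | empty => simpa [Pprod] using MvPolynomial.isHomogeneous_one (Fin n) ℝ
  | cons a m ih =>
    have : Pprod n (a ::ₘ m) = MvPolynomial.psum (Fin n) ℝ a * Pprod n m := by simp [Pprod]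
    rw [this, Multiset.sum_cons]
    exact (psum_isHomogeneous n a).mul ih

/-- A homogeneous polynomial in the span of all `Pprod` is in the span of those of matching
degree. -/
lemma mem_span_Pprod_degree {n k : ℕ} {f : MvPolynomial (Fin n) ℝ}
    (hf : f ∈ Submodule.span ℝ (Set.range (Pprod n))) (hhom : f.IsHomogeneous k) :
    f ∈ Submodule.span ℝ {g | ∃ m : Multiset ℕ, m.sum = k ∧ g = Pprod n m} := by
  have hf2 : MvPolynomial.homogeneousComponent k f ∈
      Submodule.map (MvPolynomial.homogeneousComponent (σ := Fin n) (R := ℝ) k)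
        (Submodule.span ℝ (Set.range (Pprod n))) :=
    ⟨f, hf, rfl⟩
  rw [Submodule.map_span] at hf2
  have hfk : MvPolynomial.homogeneousComponent k f = f := by
    rw [MvPolynomial.homogeneousComponent_of_mem
      ((MvPolynomial.mem_homogeneousSubmodule _ _).2 hhom), if_pos rfl]
  rw [hfk] at hf2
  refine Submodule.span_le.mpr ?_ hf2
  rintro x ⟨y, ⟨m, rfl⟩, rfl⟩
  rw [MvPolynomial.homogeneousComponent_of_mem
    ((MvPolynomial.mem_homogeneousSubmodule _ _).2 (Pprod_isHomogeneous n m))]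
  by_cases h : k = m.sum
  · rw [if_pos h]
    exact Submodule.subset_span ⟨m, h.symm, rfl⟩
  · rw [if_neg h]; exact Submodule.zero_mem _

lemma psum_eq_smul (n : ℕ) (hn : n ≠ 0) (i : ℕ) :
    MvPolynomial.psum (Fin n) ℝ i = (n : ℝ) • _root_.psum n i := by
  rw [_root_.psum, MvPolynomial.smul_eq_C_mul, ← mul_assoc, ← map_mul,
    mul_inv_cancel₀ (Nat.cast_ne_zero.mpr hn), map_one, one_mul]
  rfl

lemma Pprod_eq_smul (n : ℕ) (hn : n ≠ 0) (m : Multiset ℕ) :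
    Pprod n m = ((n : ℝ) ^ Multiset.card m) • Qprod n m := by
  induction m using Multiset.induction_on with
  | empty => simp [Pprod, Qprod]
  | cons a m ih =>
    have h1 : Pprod n (a ::ₘ m) = MvPolynomial.psum (Fin n) ℝ a * Pprod n m := by simp [Pprod]
    rw [h1, ih, Qprod_cons, psum_eq_smul n hn a, Multiset.card_cons, pow_succ]
    rw [smul_mul_assoc, mul_smul_comm, smul_smul, mul_comm ((n:ℝ) ^ Multiset.card m)]

lemma psum_zero_eq_one (n : ℕ) (hn : n ≠ 0) : _root_.psum n 0 = 1 := by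
  rw [_root_.psum]
  simp only [pow_zero]
  rw [Finset.sum_const, Finset.card_univ, Fintype.card_fin, nsmul_eq_mul,
    mul_one, ← map_natCast (C : ℝ →+* MvPolynomial (Fin n) ℝ) n, ← map_mul,
    inv_mul_cancel₀ (Nat.cast_ne_zero.mpr hn), map_one]

lemma Qprod_filter (n : ℕ) (hn : n ≠ 0) (m : Multiset ℕ) :
    Qprod n m = Qprod n (m.filter (0 < ·)) := by
  induction m using Multiset.induction_on with
  | empty => simp
  | cons a m ih =>
    by_cases ha : 0 < a
    · rw [Multiset.filter_cons_of_pos _ ha, Qprod_cons, Qprod_cons, ih]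
    · have ha0 : a = 0 := by omega
      rw [Multiset.filter_cons_of_neg _ ha, Qprod_cons, ha0, psum_zero_eq_one n hn, one_mul, ih]

lemma sum_filter_pos (m : Multiset ℕ) : (m.filter (0 < ·)).sum = m.sum := by
  induction m using Multiset.induction_on with
  | empty => simp
  | cons a m ih =>
    by_cases ha : 0 < a
    · rw [Multiset.filter_cons_of_pos _ ha, Multiset.sum_cons, Multiset.sum_cons, ih]
    · have ha0 : a = 0 := by omega
      rw [Multiset.filter_cons_of_neg _ ha, Multiset.sum_cons, ih, ha0, zero_add]

/-- The greedy splitting lemma. -/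
lemma greedy (d : ℕ) (hd : 1 ≤ d) :
    ∀ (L : List ℕ) (acc : Multiset ℕ), acc.sum < d → acc.sum + L.sum = 2 * d →
    (∃ A B : Multiset ℕ, acc + ↑L = A + B ∧ A.sum = d ∧ B.sum = d) ∨
    (∃ (p : ℕ) (A B : Multiset ℕ), acc + ↑L = p ::ₘ (A + B) ∧ A.sum < d ∧ d < A.sum + p) := by
  intro L
  induction L with
  | nil => intro acc h1 h2; simp at h2; omega
  | cons p L ih =>
    intro acc h1 h2
    have hsum : acc.sum + (p + L.sum) = 2 * d := by
      simpa using h2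
    have hco : acc + ↑(p :: L) = p ::ₘ (acc + ↑L) := by
      rw [← Multiset.cons_coe, Multiset.add_cons]
    rcases lt_trichotomy (acc.sum + p) d with h | h | h
    · have := ih (p ::ₘ acc) (by rw [Multiset.sum_cons]; omega)
        (by rw [Multiset.sum_cons]; push_cast; omega)
      have hco2 : p ::ₘ acc + ↑L = acc + ↑(p :: L) := by
        rw [hco, Multiset.cons_add]
      rw [hco2] at this
      exact this
    · left
      exact ⟨p ::ₘ acc, ↑L, by rw [hco, Multiset.cons_add], by rw [Multiset.sum_cons]; omega,
        by rw [Multiset.sum_coe]; omega⟩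
    · right
      exact ⟨p, acc, ↑L, hco, h1, h⟩

end SymFormAux

open SymFormAux in
/-- For `d ≥ 1` and `n ≥ 2d`, every symmetric form of degree `2d` in `n`
variables is a real linear combination of the forms `p_{μ1} p_{μ2}` with
`μ1, μ2 ⊢ d`, together with the forms `(p_{a+b} − p_a p_b) p_{μ1} p_{μ2}` with
`a, b ∈ {1,…,d}`, `μ1 ⊢ d − a`, `μ2 ⊢ d − b` (where the empty partition of `0`
is allowed, with `p_∅ = 1`). -/
theorem symForm_mem_span (d n : ℕ) (hd : 1 ≤ d) (hn : 2 * d ≤ n)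
    (f : MvPolynomial (Fin n) ℝ) (hsym : f.IsSymmetric) (hhom : f.IsHomogeneous (2 * d)) :
    f ∈ Submodule.span ℝ
      ({q : MvPolynomial (Fin n) ℝ |
          ∃ μ1 μ2 : Nat.Partition d, q = pPart n μ1 * pPart n μ2} ∪
       {q : MvPolynomial (Fin n) ℝ |
          ∃ a b : ℕ, 1 ≤ a ∧ a ≤ d ∧ 1 ≤ b ∧ b ≤ d ∧
            ∃ (μ1 : Nat.Partition (d - a)) (μ2 : Nat.Partition (d - b)),
              q = (psum n (a + b) - psum n a * psum n b) * pPart n μ1 * pPart n μ2}) := by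
  have hn0 : n ≠ 0 := by omega
  have h1 := mem_span_Pprod_degree (mem_span_Pprod (symm_mem_adjoin hsym)) hhom
  refine Submodule.span_le.mpr ?_ h1
  rintro x ⟨m, hm, rfl⟩
  -- reduce to the positive-part multiset
  rw [Pprod_eq_smul n hn0 m, Qprod_filter n hn0 m]
  refine Submodule.smul_mem _ _ ?_
  set M : Multiset ℕ := m.filter (0 < ·) with hM
  have hMsum : M.sum = 2 * d := by rw [hM, sum_filter_pos, hm]
  have hMpos : ∀ x ∈ M, 0 < x := fun x hx => (Multiset.mem_filter.mp hx).2
  -- greedy split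
  have hg := greedy d hd M.toList 0 (by simp; omega) (by simpa using hMsum)
  rw [Multiset.coe_toList, zero_add] at hg
  rcases hg with ⟨A, B, hAB, hA, hB⟩ | ⟨p, A, B, hAB, hA, hAp⟩
  · -- direct split into two partitions of d
    have hApos : ∀ x ∈ A, 0 < x := fun x hx => hMpos x (hAB ▸ Multiset.mem_add.mpr (Or.inl hx))
    have hBpos : ∀ x ∈ B, 0 < x := fun x hx => hMpos x (hAB ▸ Multiset.mem_add.mpr (Or.inr hx))
    refine Submodule.subset_span (Or.inl ⟨⟨A, @hApos, hA⟩, ⟨B, @hBpos, hB⟩, ?_⟩)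
    rw [hAB, Qprod_add]
    rfl
  · -- split with a distinguished part p
    have hApos : ∀ x ∈ A, 0 < x := fun x hx =>
      hMpos x (hAB ▸ Multiset.mem_cons_of_mem (Multiset.mem_add.mpr (Or.inl hx)))
    have hBpos : ∀ x ∈ B, 0 < x := fun x hx =>
      hMpos x (hAB ▸ Multiset.mem_cons_of_mem (Multiset.mem_add.mpr (Or.inr hx)))
    have hsum : p + (A.sum + B.sum) = 2 * d := by
      have : M.sum = p + (A.sum + B.sum) := by rw [hAB]; simp
      omega
    set a := d - A.sum with ha
    set b := p - a with hb
    have hab : a + b = p := by omega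
    have ha1 : 1 ≤ a := by omega
    have had : a ≤ d := by omega
    have hb1 : 1 ≤ b := by omega
    have hbd : b ≤ d := by omega
    have hAsum : A.sum = d - a := by omega
    have hBsum : B.sum = d - b := by omega
    have key : Qprod n M =
        (psum n (a + b) - psum n a * psum n b) * Qprod n A * Qprod n B +
        (psum n a * Qprod n A) * (psum n b * Qprod n B) := by
      rw [hAB, Qprod_cons, Qprod_add, hab]
      ring
    rw [key]
    refine Submodule.add_mem _ ?_ ?_
    · refine Submodule.subset_span (Or.inr ⟨a, b, ha1, had, hb1, hbd,
        ⟨A, @hApos, hAsum⟩, ⟨B, @hBpos, hBsum⟩, ?_⟩)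
      rfl
    · have hApos' : ∀ x ∈ (a ::ₘ A), 0 < x := by
        intro x hx
        rcases Multiset.mem_cons.mp hx with h | h
        · omega
        · exact hApos x h
      have hBpos' : ∀ x ∈ (b ::ₘ B), 0 < x := by
        intro x hx
        rcases Multiset.mem_cons.mp hx with h | h
        · omega
        · exact hBpos x h
      refine Submodule.subset_span (Or.inl ⟨⟨a ::ₘ A, @hApos', by rw [Multiset.sum_cons]; omega⟩,
        ⟨b ::ₘ B, @hBpos', by rw [Multiset.sum_cons]; omega⟩, ?_⟩)
      show psum n a * Qprod n A * (psum n b * Qprod n B) =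
        ((a ::ₘ A).map (psum n)).prod * ((b ::ₘ B).map (psum n)).prod
      simp [Qprod]
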